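/- For every n ≥ 1 there exists a non-deterministic generalised Büchi automaton A_n over the alphabet {1,…,2n} with n+1 states and a colour set of size 2 such that: (a) there exists a generalised Büchi automaton with a single state equivalent to A_n; and (b) every generalised Büchi automaton with a single state equivalent to A_n has a colour set of size at least 2^n. -/

import Mathlib

/-- A transition of an automaton: source state, input letter, output colour,
destination state.  (Acceptance is transition-based.) -/
structure AutTrans (Q A Γ : Type) where
  src : Q
  lab : A
  out : Γ
  dst : Q

/-- An (ω-)automaton with finite state set `Q`, input alphabet `A`,
output alphabet `Γ`, initial state `init`, transition set `delta` and
acceptance condition `acc ⊆ Γ^ω`. -/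
structure Automaton (A Γ : Type) where
  Q : Type
  fin : Fintype Q
  init : Q
  delta : Set (AutTrans Q A Γ)
  acc : Set (ℕ → Γ)

/-- The generalised Büchi condition over the colour set `C`
(output alphabet `𝒫(C)`): every colour appears infinitely often. -/
def genBuchi (C : Type) : Set (ℕ → Set C) :=
  {f | ∀ c : C, ∀ n : ℕ, ∃ m : ℕ, n ≤ m ∧ c ∈ f m}

/-- The generalised coBüchi condition over the colour set `C`:
some colour appears only finitely often. -/
def genCoBuchi (C : Type) : Set (ℕ → Set C) :=
  {f | ∃ c : C, ∃ n : ℕ, ∀ m : ℕ, n ≤ m → c ∉ f m}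

namespace Automaton

variable {A Γ : Type}

/-- Number of states. -/
def size (M : Automaton A Γ) : ℕ := @Fintype.card M.Q M.fin

/-- `ρ` is a run of `M` on the word `w`, starting in the state `q`. -/
def IsRunFrom (M : Automaton A Γ) (q : M.Q) (w : ℕ → A)
    (ρ : ℕ → AutTrans M.Q A Γ) : Prop :=
  (ρ 0).src = q ∧ ∀ n : ℕ, ρ n ∈ M.delta ∧ (ρ n).lab = w n ∧ (ρ n).dst = (ρ (n + 1)).src

/-- The language of `M` with initial state `q`. -/
def LangFrom (M : Automaton A Γ) (q : M.Q) : Set (ℕ → A) :=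
  {w | ∃ ρ : ℕ → AutTrans M.Q A Γ, M.IsRunFrom q w ρ ∧ (fun n => (ρ n).out) ∈ M.acc}

/-- The language of `M`. -/
def Lang (M : Automaton A Γ) : Set (ℕ → A) := M.LangFrom M.init

/-- For every state and letter there is at most one outgoing transition. -/
def Deterministic (M : Automaton A Γ) : Prop :=
  ∀ t ∈ M.delta, ∀ t' ∈ M.delta, t.src = t'.src → t.lab = t'.lab → t = t'

/-- For every state and letter there is at least one outgoing transition. -/
def Complete (M : Automaton A Γ) : Prop :=
  ∀ (p : M.Q) (a : A), ∃ t ∈ M.delta, t.src = p ∧ t.lab = a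

/-- The infinite sequence of transitions chosen by a resolver `r` on the word `w`
(`r` is applied to all nonempty finite prefixes of `w`). -/
def resRun (M : Automaton A Γ) (r : List A → AutTrans M.Q A Γ) (w : ℕ → A) :
    ℕ → AutTrans M.Q A Γ :=
  fun n => r (List.ofFn fun i : Fin (n + 1) => w i)

/-- `r` is a resolver for `M`: on every word it induces a run,
which is accepting whenever the word is in the language of `M`. -/
def IsResolver (M : Automaton A Γ) (r : List A → AutTrans M.Q A Γ) : Prop :=
  ∀ w : ℕ → A, M.IsRunFrom M.init w (M.resRun r w) ∧
    (w ∈ M.Lang → (fun n => (M.resRun r w n).out) ∈ M.acc)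

/-- History-determinism: existence of a resolver. -/
def HistoryDeterministic (M : Automaton A Γ) : Prop := ∃ r, M.IsResolver r

/-- `M` admits a resolver such that every state occurs on some accepting run
induced by the resolver. -/
def ResolverTrim (M : Automaton A Γ) : Prop :=
  ∃ r, M.IsResolver r ∧ ∀ q : M.Q, ∃ w ∈ M.Lang, ∃ n : ℕ, (M.resRun r w n).src = q

/-- Reachability along transitions of `M`. -/
def Reach (M : Automaton A Γ) (p q : M.Q) : Prop :=
  Relation.ReflTransGen (fun x y => ∃ t ∈ M.delta, t.src = x ∧ t.dst = y) p q

/-- Nondeterministic choices lead to language-equivalent states. -/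
def SemanticallyDeterministic (M : Automaton A Γ) : Prop :=
  ∀ t ∈ M.delta, ∀ t' ∈ M.delta, t.src = t'.src → t.lab = t'.lab →
    M.LangFrom t.dst = M.LangFrom t'.dst

/- CoBüchi notions: a coBüchi automaton has output alphabet `Set Unit`
(`𝒫(C)` with `|C| = 1`); a transition is a coBüchi transition iff its output
is `{()}` (i.e. `() ∈ out`), and safe iff its output is `∅`. -/

/-- A safe (non-coBüchi) transition from `p` to `q`. -/
def SafeStep (M : Automaton A (Set Unit)) (p q : M.Q) : Prop :=
  ∃ t ∈ M.delta, t.src = p ∧ t.dst = q ∧ () ∉ t.out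

/-- `p` and `q` lie in the same safe component (same SCC of the safe graph). -/
def SafeConn (M : Automaton A (Set Unit)) (p q : M.Q) : Prop :=
  Relation.ReflTransGen M.SafeStep p q ∧ Relation.ReflTransGen M.SafeStep q p

/-- The safe component (as a set of states) of `q`. -/
def safeComponentOf (M : Automaton A (Set Unit)) (q : M.Q) : Set M.Q :=
  {p | M.SafeConn p q}

/-- `(S, D)` is a safe component of `M`, given with its set of safe transitions. -/
def IsSafeComponent (M : Automaton A (Set Unit)) (S : Set M.Q)
    (D : Set (AutTrans M.Q A (Set Unit))) : Prop :=
  (∃ q : M.Q, S = M.safeComponentOf q) ∧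
    D = {t | t ∈ M.delta ∧ t.src ∈ S ∧ t.dst ∈ S ∧ () ∉ t.out}

/-- The safe language of the state `q`: words labelling an infinite safe path from `q`. -/
def SafeLang (M : Automaton A (Set Unit)) (q : M.Q) : Set (ℕ → A) :=
  {w | ∃ ρ : ℕ → AutTrans M.Q A (Set Unit),
    M.IsRunFrom q w ρ ∧ ∀ n : ℕ, () ∉ (ρ n).out}

/-- The automaton restricted to safe transitions is deterministic. -/
def SafeDeterministic (M : Automaton A (Set Unit)) : Prop :=
  ∀ t ∈ M.delta, ∀ t' ∈ M.delta, () ∉ t.out → () ∉ t'.out →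
    t.src = t'.src → t.lab = t'.lab → t = t'

/-- Every transition joining two distinct safe components is a coBüchi transition. -/
def NormalForm (M : Automaton A (Set Unit)) : Prop :=
  ∀ t ∈ M.delta, () ∉ t.out → M.SafeConn t.src t.dst

/-- A coBüchi automaton is nice if all states are reachable and it is
semantically deterministic, in normal form, and safe deterministic. -/
def Nice (M : Automaton A (Set Unit)) : Prop :=
  (∀ q : M.Q, M.Reach M.init q) ∧ M.SemanticallyDeterministic ∧
    M.NormalForm ∧ M.SafeDeterministic

/-- Equivalent states with equal safe languages are equal. -/
def SafeMinimal (M : Automaton A (Set Unit)) : Prop :=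
  ∀ p q : M.Q, M.LangFrom p = M.LangFrom q → M.SafeLang p = M.SafeLang q → p = q

/-- Equivalent states with safe languages comparable for inclusion lie in the
same safe component. -/
def SafeCentralised (M : Automaton A (Set Unit)) : Prop :=
  ∀ p q : M.Q, M.LangFrom p = M.LangFrom q →
    (M.SafeLang p ⊆ M.SafeLang q ∨ M.SafeLang q ⊆ M.SafeLang p) → M.SafeConn p q

end Automaton

/-- The word `u · w`. -/
def wordAppend {A : Type} (u : List A) (w : ℕ → A) : ℕ → A :=
  fun n => if h : n < u.length then u.get ⟨n, h⟩ else w (n - u.length)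

/-- The residual `u⁻¹L`. -/
def residualLang {A : Type} (u : List A) (L : Set (ℕ → A)) : Set (ℕ → A) :=
  {w | wordAppend u w ∈ L}

/-- `L` is prefix-independent: `u⁻¹L = L` for every finite word `u`. -/
def PrefixIndependent {A : Type} (L : Set (ℕ → A)) : Prop :=
  ∀ u : List A, residualLang u L = L

/-- The local alphabet `Σ_R` at the residual `R`: nonempty finite words `v`
with `v⁻¹R = R` such that no proper nonempty prefix `v'` of `v`
satisfies `v'⁻¹R = R`.  (For `R = u⁻¹L` this says `(uv)⁻¹L = u⁻¹L` and
`(uv')⁻¹L ≠ u⁻¹L` for proper nonempty prefixes.) -/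
def localAlphabet {A : Type} (R : Set (ℕ → A)) : Set (List A) :=
  {v | v ≠ [] ∧ residualLang v R = R ∧
    ∀ v' : List A, v' <+: v → v' ≠ [] → v' ≠ v → residualLang v' R ≠ R}

/-- `PathCol M q w X p`: there is a finite path of `M` from `q` to `p`
labelled by `w` whose transitions produce exactly the set of colours `X`
(the union of the outputs along the path). -/
inductive PathCol {A C : Type} (M : Automaton A (Set C)) :
    M.Q → List A → Set C → M.Q → Prop
  | nil (q : M.Q) : PathCol M q [] ∅ q
  | cons {q r : M.Q} {a : A} {w : List A} {X : Set C}
      (t : AutTrans M.Q A (Set C)) (ht : t ∈ M.delta) (hsrc : t.src = q)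
      (hlab : t.lab = a) (htail : PathCol M t.dst w X r) :
      PathCol M q (a :: w) (t.out ∪ X) r

/-- The localisation `A|_R` of a generalised coBüchi automaton `M` to the
residual `R`, with initial state `q0`: states are the states of `M`
recognising `R`, the alphabet is `Σ_R`, and there is a transition
`q →^{w:X} p` for every finite path of `M` from `q` to `p` labelled by
`w ∈ Σ_R` producing the set of colours `X`. -/
noncomputable def localAut {A C : Type} (M : Automaton A (Set C)) (R : Set (ℕ → A))
    (q0 : {q : M.Q // M.LangFrom q = R}) :
    Automaton (↥(localAlphabet R)) (Set C) where
  Q := {q : M.Q // M.LangFrom q = R}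
  fin := by
    letI := M.fin
    classical
    infer_instance
  init := q0
  delta := {t | PathCol M t.src.1 t.lab.1 t.out t.dst.1}
  acc := genCoBuchi C

/-- The automaton `M` with initial state `q`. -/
def withInit {A Γ : Type} (M : Automaton A Γ) (q : M.Q) : Automaton A Γ :=
  { M with init := q }

/-- Recolour the automaton `M` via `f`, keeping states, initial state and the
underlying transitions, and replacing the acceptance condition by `acc'`. -/
def recolor {A Γ Γ' : Type} (M : Automaton A Γ) (f : AutTrans M.Q A Γ → Γ')
    (acc' : Set (ℕ → Γ')) : Automaton A Γ' where
  Q := M.Q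
  fin := M.fin
  init := M.init
  delta := {t' | ∃ t ∈ M.delta, t'.src = t.src ∧ t'.lab = t.lab ∧ t'.out = f t ∧ t'.dst = t.dst}
  acc := acc'

/-- Concatenation of the first `k` blocks of a sequence of finite words. -/
def flattenPrefix {A : Type} (u : ℕ → List A) (k : ℕ) : List A :=
  (List.ofFn fun i : Fin k => u i).flatten

/-- `x ∈ A^ω` is the concatenation of the infinite sequence of finite words `u`. -/
def IsFlatten {A : Type} (u : ℕ → List A) (x : ℕ → A) : Prop :=
  ∀ (k n : ℕ) (h : n < (flattenPrefix u k).length),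
    (flattenPrefix u k).get ⟨n, h⟩ = x n

/-- Cascade composition `B ∘ M`: the outputs of `M` are fed as inputs to `B`. -/
def composeAut {A Γ Γ' : Type} (B : Automaton Γ Γ') (M : Automaton A Γ) :
    Automaton A Γ' where
  Q := M.Q × B.Q
  fin := by letI := M.fin; letI := B.fin; infer_instance
  init := (M.init, B.init)
  delta := {t | ∃ tM ∈ M.delta, ∃ tB ∈ B.delta,
    t.src = (tM.src, tB.src) ∧ t.lab = tM.lab ∧ tB.lab = tM.out ∧
    t.out = tB.out ∧ t.dst = (tM.dst, tB.dst)}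
  acc := B.acc

/-- The language `L_G = ⋂_v L_v` associated with a graph `G`: words over the
vertices such that for every vertex `v`, either the factor `vv` occurs
infinitely often, or letters outside the closed neighbourhood `N[v]` occur
infinitely often. -/
def LG {V : Type} (G : SimpleGraph V) : Set (ℕ → V) :=
  {w | ∀ v : V, (∀ n : ℕ, ∃ m : ℕ, n ≤ m ∧ w m = v ∧ w (m + 1) = v) ∨
      (∀ n : ℕ, ∃ m : ℕ, n ≤ m ∧ w m ≠ v ∧ ¬ G.Adj v (w m))}

namespace Stmt18Aux

def letterOf {n : ℕ} (i : Fin n) (b : Fin 2) : Fin (2 * n) :=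
  ⟨2 * i.val + b.val, by have := i.isLt; have := b.isLt; omega⟩

lemma letterOf_inj {n : ℕ} {i i' : Fin n} {b b' : Fin 2}
    (h : letterOf i b = letterOf i' b') : i = i' ∧ b = b' := by
  have h1 : 2 * i.val + b.val = 2 * i'.val + b'.val := congrArg Fin.val h
  have := b.isLt; have := b'.isLt
  exact ⟨Fin.ext (by omega), Fin.ext (by omega)⟩

/-- The language: some pair `(2i, 2i+1)` has both letters occurring infinitely often. -/
def Ln (n : ℕ) : Set (ℕ → Fin (2 * n)) :=
  {w | ∃ i : Fin n, ∀ b : Fin 2, ∀ k : ℕ, ∃ m : ℕ, k ≤ m ∧ w m = letterOf i b}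

/-- The `(n+1)`-state, 2-colour generalised Büchi automaton. -/
def Mn (n : ℕ) : Automaton (Fin (2 * n)) (Set (Fin 2)) where
  Q := Option (Fin n)
  fin := inferInstance
  init := none
  delta := {t | (t.src = none ∧ t.out = ∅) ∨
    ∃ i : Fin n, t.src = some i ∧ t.dst = some i ∧ t.out = {b | t.lab = letterOf i b}}
  acc := genBuchi (Fin 2)

def runM {n : ℕ} (w : ℕ → Fin (2 * n)) (i : Fin n) :
    ℕ → AutTrans (Option (Fin n)) (Fin (2 * n)) (Set (Fin 2))
  | 0 => ⟨none, w 0, ∅, some i⟩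
  | (m + 1) => ⟨some i, w (m + 1), {b | w (m + 1) = letterOf i b}, some i⟩

lemma Mn_lang (n : ℕ) : (Mn n).Lang = Ln n := by
  ext w
  constructor
  · rintro ⟨ρ, ⟨h0, hstep⟩, hacc⟩
    obtain ⟨m0, -, hm0⟩ := hacc 0 0
    have hm0' : (0 : Fin 2) ∈ (ρ m0).out := hm0
    rcases (hstep m0).1 with ⟨-, hout⟩ | ⟨i0, hsrc, hdst, hout⟩
    · rw [hout] at hm0'; exact absurd hm0' (Set.notMem_empty _)
    have hsome : ∀ d : ℕ, (ρ (m0 + d)).src = some i0 ∧ (ρ (m0 + d)).dst = some i0 := by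
      intro d
      induction d with
      | zero => exact ⟨hsrc, hdst⟩
      | succ d ih =>
        have hsrc' : (ρ (m0 + d + 1)).src = some i0 := by
          rw [← (hstep (m0 + d)).2.2]; exact ih.2
        rcases (hstep (m0 + d + 1)).1 with ⟨h1, -⟩ | ⟨i, h1, h2, -⟩
        · rw [hsrc'] at h1; exact absurd h1 (by simp)
        · rw [hsrc'] at h1
          have : i = i0 := by injection h1.symm
          subst this
          exact ⟨hsrc', h2⟩
    refine ⟨i0, fun b k => ?_⟩
    obtain ⟨m, hm, hb⟩ := hacc b (max k m0)
    have hb' : b ∈ (ρ m).out := hb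
    rcases (hstep m).1 with ⟨-, hout'⟩ | ⟨i, h1, -, hout'⟩
    · rw [hout'] at hb'; exact absurd hb' (Set.notMem_empty _)
    · have hm0le : m0 ≤ m := le_trans (le_max_right _ _) hm
      have hsm := (hsome (m - m0)).1
      rw [Nat.add_sub_cancel' hm0le] at hsm
      rw [hsm] at h1
      have : i = i0 := by injection h1.symm
      subst this
      rw [hout'] at hb'
      refine ⟨m, le_trans (le_max_left _ _) hm, ?_⟩
      rw [← (hstep m).2.1]; exact hb'
  · rintro ⟨i, hi⟩
    refine ⟨runM w i, ⟨rfl, fun m => ?_⟩, fun b k => ?_⟩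
    · match m with
      | 0 => exact ⟨Or.inl ⟨rfl, rfl⟩, rfl, rfl⟩
      | (m + 1) => exact ⟨Or.inr ⟨i, rfl, rfl, rfl⟩, rfl, rfl⟩
    · obtain ⟨m, hm, hw⟩ := hi b (k + 1)
      obtain ⟨m', rfl⟩ : ∃ m', m = m' + 1 := ⟨m - 1, by omega⟩
      exact ⟨m' + 1, by omega, hw⟩

/-- The one-state generalised Büchi automaton with colours `Fin n → Fin 2`. -/
def Bn (n : ℕ) : Automaton (Fin (2 * n)) (Set (Fin n → Fin 2)) where
  Q := PUnit
  fin := inferInstance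
  init := ⟨⟩
  delta := {t | t.out = {T | ∃ i, t.lab = letterOf i (T i)}}
  acc := genBuchi (Fin n → Fin 2)

lemma Bn_lang (n : ℕ) : (Bn n).Lang = Ln n := by
  classical
  ext w
  constructor
  · rintro ⟨ρ, ⟨-, hstep⟩, hacc⟩
    by_contra hcon
    simp only [Ln, Set.mem_setOf_eq] at hcon
    push_neg at hcon
    choose b k hk using hcon
    set K := Finset.univ.sup k with hK
    obtain ⟨m, hm, hT⟩ := hacc b K
    have hout : (ρ m).out = {T | ∃ i, (ρ m).lab = letterOf i (T i)} := (hstep m).1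
    have hT' : b ∈ (ρ m).out := hT
    rw [hout] at hT'
    obtain ⟨i, hi⟩ := hT'
    rw [(hstep m).2.1] at hi
    exact hk i m (le_trans (Finset.le_sup (Finset.mem_univ i)) hm) hi
  · rintro ⟨i, hi⟩
    refine ⟨fun m => ⟨⟨⟩, w m, {T | ∃ j, w m = letterOf j (T j)}, ⟨⟩⟩,
      ⟨rfl, fun m => ⟨rfl, rfl, rfl⟩⟩, fun T k => ?_⟩
    obtain ⟨m, hm, hw⟩ := hi (T i) k
    exact ⟨m, hm, ⟨i, hw⟩⟩

def wTd {n : ℕ} (hn : 0 < n) (T : Fin n → Fin 2) : ℕ → Fin (2 * n) :=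
  fun m => letterOf ⟨m % n, Nat.mod_lt _ hn⟩ (T ⟨m % n, Nat.mod_lt _ hn⟩)

lemma wTd_not_mem {n : ℕ} (hn : 0 < n) (T : Fin n → Fin 2) : wTd hn T ∉ Ln n := by
  rintro ⟨i, hi⟩
  obtain ⟨m, -, hm⟩ := hi ⟨1 - (T i).val, by omega⟩ 0
  obtain ⟨h1, h2⟩ := letterOf_inj hm
  rw [h1] at h2
  have hv : (T i).val = 1 - (T i).val := congrArg Fin.val h2
  have := (T i).isLt
  omega

lemma lower {n : ℕ} (hn : 0 < n) (C₂ : Type) [iC₂ : Fintype C₂]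
    (B : Automaton (Fin (2 * n)) (Set C₂)) (hacc : B.acc = genBuchi C₂)
    (hsize : B.size = 1) (hlang : B.Lang = Ln n) :
    2 ^ n ≤ Fintype.card C₂ := by
  classical
  letI := B.fin
  have hsub : Subsingleton B.Q := by
    have : @Fintype.card B.Q B.fin ≤ 1 := le_of_eq hsize
    exact Fintype.card_le_one_iff_subsingleton.mp this
  have hrun : ∀ (w : ℕ → Fin (2 * n)) (ρ : ℕ → AutTrans B.Q (Fin (2 * n)) (Set C₂)),
      (∀ m, ρ m ∈ B.delta ∧ (ρ m).lab = w m) → B.IsRunFrom B.init w ρ :=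
    fun w ρ h => ⟨Subsingleton.elim _ _, fun m => ⟨(h m).1, (h m).2, Subsingleton.elim _ _⟩⟩
  -- every letter has some transition
  have hlet : ∀ a : Fin (2 * n), ∃ t ∈ B.delta, t.lab = a := by
    intro a
    have hu : (fun m => if m = 0 then a
        else letterOf (⟨0, hn⟩ : Fin n) ⟨m % 2, Nat.mod_lt _ two_pos⟩) ∈ Ln n := by
      refine ⟨⟨0, hn⟩, fun b k => ?_⟩
      refine ⟨2 * k + 2 + b.val, by omega, ?_⟩
      have hne : 2 * k + 2 + b.val ≠ 0 := by omega
      show (if 2 * k + 2 + b.val = 0 then a else _) = _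
      rw [if_neg hne]
      have hb := b.isLt
      exact congrArg (letterOf _) (Fin.ext (by simp; omega))
    rw [← hlang] at hu
    obtain ⟨ρ, ⟨-, hstep⟩, -⟩ := hu
    refine ⟨ρ 0, (hstep 0).1, ?_⟩
    rw [(hstep 0).2.1]
    rfl
  choose td htdmem htdlab using hlet
  -- for each transversal T, a colour never output on letters of T
  have hcol : ∀ T : Fin n → Fin 2, ∃ c : C₂,
      ∀ t ∈ B.delta, (∃ i, t.lab = letterOf i (T i)) → c ∉ t.out := by
    intro T
    by_contra hc
    push_neg at hc
    have hwTacc : wTd hn T ∈ B.Lang := by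
      rcases isEmpty_or_nonempty C₂ with hE | hNE
      · refine ⟨fun m => td (wTd hn T m),
          hrun _ _ (fun m => ⟨htdmem _, htdlab _⟩), ?_⟩
        rw [hacc]; intro c; exact hE.elim c
      · choose tc htcmem htci htcout using hc
        choose ic hic using htci
        set N := Fintype.card C₂ with hNdef
        have hN : 0 < N := Fintype.card_pos
        set e : Fin N ≃ C₂ := (Fintype.equivFin C₂).symm with hedef
        set col : ℕ → C₂ := fun q => e ⟨q % N, Nat.mod_lt _ hN⟩ with hcoldef
        set ρ : ℕ → AutTrans B.Q (Fin (2 * n)) (Set C₂) :=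
          fun m => if m % n = (ic (col (m / n))).val then tc (col (m / n))
            else td (wTd hn T m) with hρdef
        have hsteps : ∀ m, ρ m ∈ B.delta ∧ (ρ m).lab = wTd hn T m := by
          intro m
          by_cases h : m % n = (ic (col (m / n))).val
          · have hρm : ρ m = tc (col (m / n)) := by rw [hρdef]; simp only [if_pos h]
            refine ⟨hρm ▸ htcmem _, ?_⟩
            rw [hρm, hic (col (m / n))]
            have hidx : (⟨m % n, Nat.mod_lt _ hn⟩ : Fin n) = ic (col (m / n)) := Fin.ext h
            show letterOf _ _ = wTd hn T m
            rw [wTd, hidx]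
          · have hρm : ρ m = td (wTd hn T m) := by rw [hρdef]; simp only [if_neg h]
            exact ⟨hρm ▸ htdmem _, hρm ▸ htdlab _⟩
        refine ⟨ρ, hrun _ _ hsteps, ?_⟩
        rw [hacc]
        intro c k
        set j := (e.symm c).val with hjdef
        have hj : j < N := (e.symm c).isLt
        set q := j + N * (k + 1) with hqdef
        set m := (ic c).val + n * q with hmdef
        have hq1 : k + 1 ≤ N * (k + 1) := Nat.le_mul_of_pos_left (k + 1) hN
        have hq2 : q ≤ n * q := Nat.le_mul_of_pos_left q hn
        have hic1 := (ic c).isLt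
        have hdiv : m / n = q := by
          rw [hmdef, Nat.add_mul_div_left _ _ hn, Nat.div_eq_of_lt hic1, Nat.zero_add]
        have hmod : m % n = (ic c).val := by
          rw [hmdef, Nat.add_mul_mod_self_left, Nat.mod_eq_of_lt hic1]
        have hcolq : col q = c := by
          have hq : q % N = j := by
            rw [hqdef, Nat.add_mul_mod_self_left, Nat.mod_eq_of_lt hj]
          rw [hcoldef]
          simp only
          have : (⟨q % N, Nat.mod_lt _ hN⟩ : Fin N) = e.symm c := Fin.ext hq
          rw [this, Equiv.apply_symm_apply]
        have hρm : ρ m = tc c := by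
          rw [hρdef]; simp only
          rw [hdiv, hcolq, if_pos hmod]
        refine ⟨m, by omega, ?_⟩
        show c ∈ (ρ m).out
        rw [hρm]; exact htcout c
    rw [hlang] at hwTacc
    exact wTd_not_mem hn T hwTacc
  choose cF hcF using hcol
  have hinj : Function.Injective cF := by
    intro T T' hTT'
    by_contra hne
    obtain ⟨i0, hi0⟩ := Function.ne_iff.mp hne
    set w' : ℕ → Fin (2 * n) :=
      fun m => if m % 2 = 0 then wTd hn T (m / 2) else wTd hn T' (m / 2) with hw'def
    have hw' : w' ∈ Ln n := by
      refine ⟨i0, fun b k => ?_⟩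
      set p := i0.val + n * (k + 1) with hpdef
      have hp1 : k + 1 ≤ n * (k + 1) := Nat.le_mul_of_pos_left (k + 1) hn
      have hpmod : p % n = i0.val := by
        rw [hpdef, Nat.add_mul_mod_self_left, Nat.mod_eq_of_lt i0.isLt]
      have hidx : (⟨p % n, Nat.mod_lt _ hn⟩ : Fin n) = i0 := Fin.ext hpmod
      have hbv : b = T i0 ∨ b = T' i0 := by
        have h1 := b.isLt; have h2 := (T i0).isLt; have h3 := (T' i0).isLt
        have h4 : (T i0).val ≠ (T' i0).val := fun h => hi0 (Fin.ext h)
        by_cases hb : b.val = (T i0).val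
        · exact Or.inl (Fin.ext hb)
        · exact Or.inr (Fin.ext (by omega))
      rcases hbv with hb | hb
      · refine ⟨2 * p, by omega, ?_⟩
        have h2p : (2 * p) % 2 = 0 := by omega
        have h2p' : (2 * p) / 2 = p := by omega
        rw [hw'def]; simp only
        rw [h2p', if_pos h2p, wTd, hidx, hb]
      · refine ⟨2 * p + 1, by omega, ?_⟩
        have h2p : (2 * p + 1) % 2 ≠ 0 := by omega
        have h2p' : (2 * p + 1) / 2 = p := by omega
        rw [hw'def]; simp only
        rw [h2p', if_neg h2p, wTd, hidx, hb]
    rw [← hlang] at hw'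
    obtain ⟨ρ, ⟨-, hstep⟩, haccw⟩ := hw'
    rw [hacc] at haccw
    obtain ⟨m, -, hcm₀⟩ := haccw (cF T) 0
    have hcm : cF T ∈ (ρ m).out := hcm₀
    have hlab := (hstep m).2.1
    by_cases hpar : m % 2 = 0
    · refine hcF T (ρ m) (hstep m).1 ⟨⟨(m / 2) % n, Nat.mod_lt _ hn⟩, ?_⟩ hcm
      rw [hlab, hw'def]; simp only
      rw [if_pos hpar, wTd]
    · refine hcF T' (ρ m) (hstep m).1 ⟨⟨(m / 2) % n, Nat.mod_lt _ hn⟩, ?_⟩ (hTT' ▸ hcm)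
      rw [hlab, hw'def]; simp only
      rw [if_neg hpar, wTd]
  calc 2 ^ n = Fintype.card (Fin n → Fin 2) := by simp
    _ ≤ Fintype.card C₂ := Fintype.card_le_of_injective cF hinj

end Stmt18Aux

/-- for every `n ≥ 1` there is a non-deterministic generalised
Büchi automaton `A_n` over the alphabet `{1, …, 2n}` with `n + 1` states and
`2` colours that is equivalent to some one-state generalised Büchi automaton,
while every one-state generalised Büchi automaton equivalent to `A_n` needs at
least `2ⁿ` colours. -/
theorem stmt_18 (n : ℕ) (hn : 1 ≤ n) :
    ∃ (C : Type) (iC : Fintype C) (M : Automaton (Fin (2 * n)) (Set C)),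
      M.acc = genBuchi C ∧ M.size = n + 1 ∧ @Fintype.card C iC = 2 ∧
      (∃ (C₁ : Type) (_ : Fintype C₁) (B : Automaton (Fin (2 * n)) (Set C₁)),
        B.acc = genBuchi C₁ ∧ B.size = 1 ∧ B.Lang = M.Lang) ∧
      (∀ (C₂ : Type) (iC₂ : Fintype C₂) (B : Automaton (Fin (2 * n)) (Set C₂)),
        B.acc = genBuchi C₂ → B.size = 1 → B.Lang = M.Lang →
        2 ^ n ≤ @Fintype.card C₂ iC₂) := by
  refine ⟨Fin 2, inferInstance, Stmt18Aux.Mn n, rfl, ?_, by simp, ?_, ?_⟩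
  · simp [Automaton.size, Stmt18Aux.Mn]; exact Fintype.card_option.trans (by simp)
  · exact ⟨Fin n → Fin 2, inferInstance, Stmt18Aux.Bn n, rfl,
      by simp [Automaton.size, Stmt18Aux.Bn]; exact Fintype.card_unique,
      by rw [Stmt18Aux.Bn_lang, Stmt18Aux.Mn_lang]⟩
  · intro C₂ iC₂ B h1 h2 h3
    exact Stmt18Aux.lower hn C₂ B h1 h2 (by rw [h3, Stmt18Aux.Mn_lang])
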